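/- For every ε ∈ (0, 1) there exists a 2-extendible independence system (X, I) with nonnegative additive weights w whose instance is (4−ε)-stable with unique optimal solution S*, together with a maximal independent set A ≠ S* that is a (2,1)-local optimum (for every e ∈ X \ A and Z ⊆ A with |Z| ≤ 2 and (A \ Z) ∪ {e} ∈ I, w((A \ Z) ∪ {e}) ≤ w(A)) and satisfies w(S*) ≥ (4−ε)·w(A). In particular, the p² approximation factor and the p²-stability recovery threshold of (p,1)-local search on p-extendible systems are tight for p = 2. -/

import Mathlib

open Finset

/-- A downward-closed independence system on the finite type `α`. -/
def DownClosed {α : Type*} (I : Finset α → Prop) : Prop :=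
  I ∅ ∧ ∀ A B : Finset α, I A → B ⊆ A → I B
/-- `(X, I)` is `p`-extendible: whenever `A ⊆ B`, `A, B ∈ I` and `A ∪ {e} ∈ I`,
there is `Z ⊆ B \ A` with `|Z| ≤ p` and `(B \ Z) ∪ {e} ∈ I`. -/
def Extendible {α : Type*} [DecidableEq α] (p : ℕ) (I : Finset α → Prop) : Prop :=
  ∀ A B : Finset α, ∀ e : α, A ⊆ B → I A → I B → I (insert e A) →
    ∃ Z ⊆ B \ A, Z.card ≤ p ∧ I (insert e (B \ Z))
/-- The additive instance `(I, w)` is `γ`-stable with (unique) optimal solution `S`: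
for every perturbation `w'` with `w ≤ w' ≤ γ·w`, `S` is the unique maximizer of `w'` over `I`. -/
def AddStable {α : Type*} (I : Finset α → Prop) (w : α → ℝ) (γ : ℝ)
    (S : Finset α) : Prop :=
  I S ∧ ∀ w' : α → ℝ, (∀ e, w e ≤ w' e ∧ w' e ≤ γ * w e) →
    ∀ T : Finset α, I T → T ≠ S → ∑ e ∈ T, w' e < ∑ e ∈ S, w' e
/-- `A` is a `(p,1)`-local optimum for `f` over `I`: no swap that removes at most `p`
elements of `A` and adds one new element yields a feasible set of larger `f`-value. -/
def LocalOpt {α : Type*} [DecidableEq α] (p : ℕ) (I : Finset α → Prop)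
    (f : Finset α → ℝ) (A : Finset α) : Prop :=
  ∀ e ∉ A, ∀ Z ⊆ A, Z.card ≤ p → I (insert e (A \ Z)) →
    f (insert e (A \ Z)) ≤ f A

namespace LST19

variable (m : ℕ)

abbrev N : ℕ := 3 * m - 2

def pa (e : Fin (N m)) : Prop := (e : ℕ) < m

instance : DecidablePred (pa m) := fun _ => Nat.decLt _ _

def ac (S : Finset (Fin (N m))) : ℕ := (S.filter (pa m)).card
def bc (S : Finset (Fin (N m))) : ℕ := (S.filter (fun e => ¬ pa m e)).card

def Ind (S : Finset (Fin (N m))) : Prop :=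
  bc m S = 0 ∨ bc m S + 2 * ac m S ≤ 2 * m - 2

def Aset : Finset (Fin (N m)) := univ.filter (pa m)
def Bset : Finset (Fin (N m)) := univ.filter (fun e => ¬ pa m e)

variable {m}

lemma ac_add_bc (S : Finset (Fin (N m))) : ac m S + bc m S = S.card :=
  card_filter_add_card_filter_not _

lemma ac_mono {S T : Finset (Fin (N m))} (h : S ⊆ T) : ac m S ≤ ac m T :=
  card_le_card (filter_subset_filter _ h)

lemma bc_mono {S T : Finset (Fin (N m))} (h : S ⊆ T) : bc m S ≤ bc m T :=
  card_le_card (filter_subset_filter _ h)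

lemma ac_sdiff_add {S Z : Finset (Fin (N m))} (h : Z ⊆ S) :
    ac m (S \ Z) + ac m Z = ac m S := by
  have h1 : (S \ Z).filter (pa m) = S.filter (pa m) \ Z.filter (pa m) := by
    ext x; simp only [mem_filter, mem_sdiff]; tauto
  simp only [ac]
  rw [h1]
  exact card_sdiff_add_card_eq_card (filter_subset_filter _ h)

lemma bc_sdiff_add {S Z : Finset (Fin (N m))} (h : Z ⊆ S) :
    bc m (S \ Z) + bc m Z = bc m S := by
  have h1 : (S \ Z).filter (fun e => ¬ pa m e)
      = S.filter (fun e => ¬ pa m e) \ Z.filter (fun e => ¬ pa m e) := by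
    ext x; simp only [mem_filter, mem_sdiff]; tauto
  simp only [bc]
  rw [h1]
  exact card_sdiff_add_card_eq_card (filter_subset_filter _ h)

lemma ac_insert_a {S : Finset (Fin (N m))} {e : Fin (N m)} (he : e ∉ S) (hp : pa m e) :
    ac m (insert e S) = ac m S + 1 := by
  simp only [ac]
  rw [filter_insert, if_pos hp, card_insert_of_notMem]
  intro h; exact he (mem_filter.mp h).1

lemma ac_insert_b {S : Finset (Fin (N m))} {e : Fin (N m)} (hp : ¬ pa m e) :
    ac m (insert e S) = ac m S := by
  simp only [ac]
  rw [filter_insert, if_neg hp]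

lemma bc_insert_a {S : Finset (Fin (N m))} {e : Fin (N m)} (hp : pa m e) :
    bc m (insert e S) = bc m S := by
  simp only [bc]
  rw [filter_insert, if_neg (by simpa using hp)]

lemma bc_insert_b {S : Finset (Fin (N m))} {e : Fin (N m)} (he : e ∉ S) (hp : ¬ pa m e) :
    bc m (insert e S) = bc m S + 1 := by
  simp only [bc]
  rw [filter_insert, if_pos hp, card_insert_of_notMem]
  intro h; exact he (mem_filter.mp h).1

lemma ac_singleton_a {e : Fin (N m)} (hp : pa m e) : ac m {e} = 1 := by
  simp only [ac]; rw [filter_singleton, if_pos hp, card_singleton]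

lemma ac_singleton_b {e : Fin (N m)} (hp : ¬ pa m e) : ac m {e} = 0 := by
  simp only [ac]; rw [filter_singleton, if_neg hp, card_empty]

lemma bc_singleton_a {e : Fin (N m)} (hp : pa m e) : bc m {e} = 0 := by
  simp only [bc]; rw [filter_singleton, if_neg (by simpa using hp), card_empty]

lemma bc_singleton_b {e : Fin (N m)} (hp : ¬ pa m e) : bc m {e} = 1 := by
  simp only [bc]; rw [filter_singleton, if_pos hp, card_singleton]

lemma card_Aset (hm : 1 ≤ m) : (Aset m).card = m := by
  have h : ∀ x ∈ Finset.range m, x < N m := by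
    intro x hx; simp only [mem_range] at hx; simp only [N]; omega
  have heq : Aset m = Finset.attachFin (Finset.range m) h := by
    ext x
    simp [Aset, pa, Finset.mem_attachFin, Finset.mem_range]
  rw [heq, Finset.card_attachFin, Finset.card_range]

lemma card_Bset (hm : 1 ≤ m) : (Bset m).card = 2 * m - 2 := by
  have h1 : (Aset m).card + (Bset m).card = N m := by
    rw [Aset, Bset, card_filter_add_card_filter_not, card_univ, Fintype.card_fin]
  rw [card_Aset hm] at h1
  simp only [N] at h1
  omega

lemma ac_le (hm : 1 ≤ m) (S : Finset (Fin (N m))) : ac m S ≤ m := by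
  have h1 := ac_mono (subset_univ S) (m := m)
  have h2 : ac m univ = m := card_Aset hm
  omega

lemma bc_Aset : bc m (Aset m) = 0 := by
  simp only [bc]; rw [card_eq_zero]
  apply filter_eq_empty_iff.mpr
  intro x hx; simp only [Aset, mem_filter] at hx
  intro h; exact h hx.2

lemma ac_Aset (hm : 1 ≤ m) : ac m (Aset m) = m := by
  have h := ac_add_bc (Aset m)
  rw [bc_Aset, card_Aset hm] at h
  omega

lemma ac_Bset : ac m (Bset m) = 0 := by
  simp only [ac]; rw [card_eq_zero]
  apply filter_eq_empty_iff.mpr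
  intro x hx; simp only [Bset, mem_filter] at hx
  exact hx.2

lemma bc_Bset (hm : 1 ≤ m) : bc m (Bset m) = 2 * m - 2 := by
  have h := ac_add_bc (Bset m)
  rw [ac_Bset, card_Bset hm] at h
  omega

/-- The independence system is downward closed. -/
lemma downClosed : DownClosed (Ind m) := by
  constructor
  · left; simp [bc]
  · intro A B hA hBA
    rcases hA with h | h
    · left; have := bc_mono hBA (m := m); omega
    · right
      have h1 := bc_mono hBA (m := m)
      have h2 := ac_mono hBA (m := m)
      omega

/-- The independence system is 2-extendible. -/
lemma extendible (hm : 9 ≤ m) : Extendible 2 (Ind m) := by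
  intro A' B e hAB hIA hIB hIns
  by_cases heB : e ∈ B
  · exact ⟨∅, empty_subset _, by simp,
      by rwa [sdiff_empty, insert_eq_self.mpr heB]⟩
  by_cases hFc : (B \ A').card ≤ 2
  · refine ⟨B \ A', Subset.rfl, hFc, ?_⟩
    rwa [Finset.sdiff_sdiff_self_left, Finset.inter_eq_right.mpr hAB]
  push_neg at hFc
  by_cases hpe : pa m e
  · -- inserting an a-element
    by_cases hj : bc m B = 0
    · refine ⟨∅, empty_subset _, by simp, Or.inl ?_⟩
      rw [sdiff_empty, bc_insert_a hpe]; exact hj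
    · have hBload : bc m B + 2 * ac m B ≤ 2 * m - 2 := hIB.resolve_left hj
      by_cases h2 : bc m B + 2 * ac m B + 2 ≤ 2 * m - 2
      · refine ⟨∅, empty_subset _, by simp, Or.inr ?_⟩
        rw [sdiff_empty, bc_insert_a hpe, ac_insert_a heB hpe]
        omega
      · by_cases hax : ((B \ A').filter (pa m)).Nonempty
        · obtain ⟨x, hx⟩ := hax
          rw [mem_filter] at hx
          have hxB : x ∈ B := (mem_sdiff.mp hx.1).1
          have hsub : {x} ⊆ B := singleton_subset_iff.mpr hxB
          have heB' : e ∉ B \ {x} := fun h => heB (mem_sdiff.mp h).1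
          refine ⟨{x}, singleton_subset_iff.mpr hx.1, by simp, Or.inr ?_⟩
          rw [bc_insert_a hpe, ac_insert_a heB' hpe]
          have ha := ac_sdiff_add hsub
          have hb := bc_sdiff_add hsub
          rw [ac_singleton_a hx.2] at ha
          rw [bc_singleton_a hx.2] at hb
          omega
        · -- B \ A' consists only of b-elements; pick two of them
          obtain ⟨Z, hZF, hZc⟩ := Finset.exists_subset_card_eq (by omega : 2 ≤ (B \ A').card)
          have hZB : Z ⊆ B := hZF.trans (sdiff_subset)
          have hacZ : ac m Z = 0 := by
            simp only [ac]; rw [card_eq_zero]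
            apply filter_eq_empty_iff.mpr
            intro x hx hpx
            exact hax ⟨x, mem_filter.mpr ⟨hZF hx, hpx⟩⟩
          have hbcZ : bc m Z = 2 := by
            have := ac_add_bc Z; omega
          have heB' : e ∉ B \ Z := fun h => heB (mem_sdiff.mp h).1
          refine ⟨Z, hZF, le_of_eq hZc, Or.inr ?_⟩
          rw [bc_insert_a hpe, ac_insert_a heB' hpe]
          have ha := ac_sdiff_add hZB
          have hb := bc_sdiff_add hZB
          omega
  · -- inserting a b-element
    have heA' : e ∉ A' := fun h => heB (hAB h)
    by_cases hj : bc m B = 0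
    · -- B is pure; all of B \ A' are a-elements
      have hpure : ∀ x ∈ B, pa m x := by
        intro x hx
        by_contra hpx
        have : bc m B ≠ 0 := by
          simp only [bc]; rw [← Nat.pos_iff_ne_zero]
          exact card_pos.mpr ⟨x, mem_filter.mpr ⟨hx, hpx⟩⟩
        exact this hj
      by_cases ht : 2 * ac m B + 1 ≤ 2 * m - 2
      · refine ⟨∅, empty_subset _, by simp, Or.inr ?_⟩
        rw [sdiff_empty, bc_insert_b heB hpe, ac_insert_b hpe]
        omega
      · obtain ⟨Z, hZF, hZc⟩ := Finset.exists_subset_card_eq (by omega : 2 ≤ (B \ A').card)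
        have hZB : Z ⊆ B := hZF.trans (sdiff_subset)
        have hbcZ : bc m Z = 0 := by
          simp only [bc]; rw [card_eq_zero]
          apply filter_eq_empty_iff.mpr
          intro x hx hpx
          exact hpx (hpure x (hZB hx))
        have hacZ : ac m Z = 2 := by
          have := ac_add_bc Z; omega
        have heB' : e ∉ B \ Z := fun h => heB (mem_sdiff.mp h).1
        refine ⟨Z, hZF, le_of_eq hZc, Or.inr ?_⟩
        rw [bc_insert_b heB' hpe, ac_insert_b hpe]
        have ha := ac_sdiff_add hZB
        have hb := bc_sdiff_add hZB
        have hacB := ac_le (by omega : 1 ≤ m) B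
        omega
    · have hBload : bc m B + 2 * ac m B ≤ 2 * m - 2 := hIB.resolve_left hj
      by_cases h1 : bc m B + 2 * ac m B + 1 ≤ 2 * m - 2
      · refine ⟨∅, empty_subset _, by simp, Or.inr ?_⟩
        rw [sdiff_empty, bc_insert_b heB hpe, ac_insert_b hpe]
        omega
      · -- load B is exactly the cap; remove any single element of B \ A'
        have hne : (B \ A').Nonempty := by
          rw [← card_pos]; omega
        obtain ⟨x, hx⟩ := hne
        have hxB : x ∈ B := (mem_sdiff.mp hx).1
        have hsub : {x} ⊆ B := singleton_subset_iff.mpr hxB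
        have heB' : e ∉ B \ {x} := fun h => heB (mem_sdiff.mp h).1
        have ha := ac_sdiff_add hsub
        have hb := bc_sdiff_add hsub
        refine ⟨{x}, singleton_subset_iff.mpr hx, by simp, Or.inr ?_⟩
        rw [bc_insert_b heB' hpe, ac_insert_b hpe]
        by_cases hpx : pa m x
        · rw [ac_singleton_a hpx] at ha
          rw [bc_singleton_a hpx] at hb
          omega
        · rw [ac_singleton_b hpx] at ha
          rw [bc_singleton_b hpx] at hb
          omega


lemma mem_Aset {x : Fin (N m)} : x ∈ Aset m ↔ pa m x := by
  simp [Aset]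

lemma mem_Bset {x : Fin (N m)} : x ∈ Bset m ↔ ¬ pa m x := by
  simp [Bset]

lemma sum_ite (α β : ℝ) (S : Finset (Fin (N m))) :
    ∑ e ∈ S, (if pa m e then α else β) = (ac m S : ℝ) * α + (bc m S : ℝ) * β := by
  rw [← sum_filter_add_sum_filter_not S (pa m)]
  rw [sum_congr rfl (fun e he => if_pos (mem_filter.mp he).2),
      sum_congr rfl (fun e he => if_neg (mem_filter.mp he).2),
      sum_const, sum_const, nsmul_eq_mul, nsmul_eq_mul]
  rfl

end LST19

/-- For every `ε ∈ (0,1)` there is a `2`-extendible system with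
nonnegative additive weights whose instance is `(4−ε)`-stable with unique optimum `S*`,
together with a maximal independent `(2,1)`-locally optimal set `A ≠ S*` satisfying
`w(S*) ≥ (4−ε)·w(A)`: the `p²` guarantees for `(p,1)`-local search are tight at `p = 2`. -/
theorem local_search_tightness_two_extendible
    (ε : ℝ) (hε0 : 0 < ε) (hε1 : ε < 1) :
    ∃ (n : ℕ) (I : Finset (Fin n) → Prop) (w : Fin n → ℝ)
      (Sstar A : Finset (Fin n)),
      (∀ e, 0 ≤ w e) ∧ DownClosed I ∧ Extendible 2 I ∧
      AddStable I w (4 - ε) Sstar ∧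
      A ≠ Sstar ∧ I A ∧ (∀ e, e ∉ A → ¬ I (insert e A)) ∧
      LocalOpt 2 I (fun S => ∑ e ∈ S, w e) A ∧
      (4 - ε) * (∑ e ∈ A, w e) ≤ ∑ e ∈ Sstar, w e := by
  classical
  set m : ℕ := max 9 ⌈(8:ℝ)/ε⌉₊ with hmdef
  have hm9 : 9 ≤ m := le_max_left _ _
  have hm1 : 1 ≤ m := by omega
  have hmc : (8:ℝ)/ε ≤ (m:ℝ) := by
    calc (8:ℝ)/ε ≤ (⌈(8:ℝ)/ε⌉₊ : ℝ) := Nat.le_ceil _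
    _ ≤ (m:ℝ) := by exact_mod_cast Nat.cast_le.mpr (le_max_right _ _)
  have hεm : 8 ≤ ε * (m:ℝ) := by
    rw [div_le_iff₀ hε0] at hmc
    linarith [hmc]
  have hβpos : (0:ℝ) < 2 - ε/4 := by linarith
  have hm2 : (2:ℕ) ≤ 2*m := by omega
  have hcast : ((2*m - 2 : ℕ) : ℝ) = 2*(m:ℝ) - 2 := by
    push_cast [Nat.cast_sub hm2]; ring
  open LST19 in
  refine ⟨N m, Ind m, fun e => if pa m e then (1:ℝ) else 2 - ε/4,
    Bset m, Aset m, ?_, downClosed, extendible hm9, ⟨?_, ?_⟩, ?_, ?_, ?_, ?_, ?_⟩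
  · -- nonnegativity
    intro e; dsimp only; split <;> linarith
  · -- S* is independent
    right; rw [bc_Bset hm1, ac_Bset]; omega
  · -- stability
    intro w' hw' T hIT hTne
    have hTB : T \ Bset m = T.filter (pa m) := by
      ext x
      simp only [mem_sdiff, mem_Bset, mem_filter, not_not]
    have hBTi : Bset m ∩ T = T.filter (fun e => ¬ pa m e) := by
      ext x
      simp only [mem_inter, mem_Bset, mem_filter]
      tauto
    have hBT_card : (Bset m \ T).card + bc m T = 2*m - 2 := by
      have h := card_sdiff_add_card_inter (Bset m) T
      rw [hBTi, card_Bset hm1] at h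
      exact h
    have hne : ¬ (ac m T = 0 ∧ bc m T = 2*m - 2) := by
      rintro ⟨h1, h2⟩
      apply hTne
      have hsub : T.filter (fun e => ¬ pa m e) ⊆ Bset m :=
        filter_subset_filter _ (subset_univ T)
      have h2' : (T.filter (fun e => ¬ pa m e)).card = 2*m - 2 := h2
      have heq : T.filter (fun e => ¬ pa m e) = Bset m :=
        eq_of_subset_of_card_le hsub (by rw [card_Bset hm1]; omega)
      have h3 : T.filter (pa m) = ∅ := card_eq_zero.mp h1
      calc T = T.filter (pa m) ∪ T.filter (fun e => ¬ pa m e) :=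
            (filter_union_filter_not_eq _ T).symm
        _ = Bset m := by rw [h3, heq, empty_union]
    have hupper : ∑ e ∈ T \ Bset m, w' e ≤ (4 - ε) * (ac m T : ℝ) := by
      calc ∑ e ∈ T \ Bset m, w' e
          ≤ ∑ e ∈ T \ Bset m, (4 - ε) * (if pa m e then (1:ℝ) else 2 - ε/4) :=
            sum_le_sum (fun e _ => (hw' e).2)
        _ = (4 - ε) * (ac m T : ℝ) := by
            rw [hTB]
            simp only [ac]
            rw [sum_congr rfl (fun e he => by
              rw [if_pos (mem_filter.mp he).2, mul_one]), sum_const, nsmul_eq_mul]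
            ring
    have hlower : (2 - ε/4) * ((Bset m \ T).card : ℝ) ≤ ∑ e ∈ Bset m \ T, w' e := by
      calc (2 - ε/4) * ((Bset m \ T).card : ℝ)
          = ∑ e ∈ Bset m \ T, (if pa m e then (1:ℝ) else 2 - ε/4) := by
            rw [sum_congr rfl (fun e he => by
              rw [if_neg (mem_Bset.mp (mem_sdiff.mp he).1)]), sum_const, nsmul_eq_mul]
            ring
        _ ≤ ∑ e ∈ Bset m \ T, w' e := sum_le_sum (fun e _ => (hw' e).1)
    have hnum : (4 - ε) * (ac m T : ℝ) < (2 - ε/4) * ((Bset m \ T).card : ℝ) := by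
      have htle : ac m T ≤ m := ac_le hm1 T
      rcases hIT with h0 | hload
      · -- T has no b-elements
        have hc : (Bset m \ T).card = 2*m - 2 := by omega
        have htleR : (ac m T : ℝ) ≤ (m : ℝ) := by exact_mod_cast htle
        rw [hc, hcast]
        nlinarith [hεm, hε0, mul_le_mul_of_nonneg_left htleR (by linarith : (0:ℝ) ≤ 4 - ε)]
      · have hge : 2 * ac m T ≤ (Bset m \ T).card := by omega
        by_cases ht0 : ac m T = 0
        · have hc1 : 1 ≤ (Bset m \ T).card := by
            rcases Nat.eq_zero_or_pos (Bset m \ T).card with h | h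
            · exact absurd ⟨ht0, by omega⟩ hne
            · omega
          have hc1R : (1:ℝ) ≤ ((Bset m \ T).card : ℝ) := by exact_mod_cast hc1
          rw [ht0]
          push_cast
          nlinarith
        · have ht1 : 1 ≤ ac m T := Nat.one_le_iff_ne_zero.mpr ht0
          have ht1R : (1:ℝ) ≤ (ac m T : ℝ) := by exact_mod_cast ht1
          have hgeR : 2 * (ac m T : ℝ) ≤ ((Bset m \ T).card : ℝ) := by exact_mod_cast hge
          nlinarith [hε0, hε1]
    have hs1 : ∑ e ∈ T ∩ Bset m, w' e + ∑ e ∈ T \ Bset m, w' e = ∑ e ∈ T, w' e :=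
      sum_inter_add_sum_sdiff T (Bset m) w'
    have hs2 : ∑ e ∈ Bset m ∩ T, w' e + ∑ e ∈ Bset m \ T, w' e = ∑ e ∈ Bset m, w' e :=
      sum_inter_add_sum_sdiff (Bset m) T w'
    have hcomm : ∑ e ∈ T ∩ Bset m, w' e = ∑ e ∈ Bset m ∩ T, w' e := by rw [inter_comm]
    linarith
  · -- A ≠ S*
    intro h
    have h0N : 0 < N m := by simp only [N]; omega
    have hmem : (⟨0, h0N⟩ : Fin (N m)) ∈ Aset m :=
      mem_Aset.mpr (by simpa [pa] using (show 0 < m by omega))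
    rw [h] at hmem
    exact (mem_Bset.mp hmem) (by simpa [pa] using (show 0 < m by omega))
  · -- A is independent
    left; exact bc_Aset
  · -- A is maximal
    intro e he hInd
    have hpe : ¬ pa m e := fun hp => he (mem_Aset.mpr hp)
    rcases hInd with h | h
    · rw [bc_insert_b he hpe, bc_Aset] at h
      omega
    · rw [bc_insert_b he hpe, bc_Aset, ac_insert_b hpe, ac_Aset hm1] at h
      omega
  · -- A is a (2,1)-local optimum
    intro e he Z hZA hZc hInd
    have hpe : ¬ pa m e := fun hp => he (mem_Aset.mpr hp)
    have heAZ : e ∉ Aset m \ Z := fun h => he (mem_sdiff.mp h).1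
    have hacZ : ac m Z = Z.card := by
      simp only [ac]
      congr 1
      exact filter_eq_self.mpr (fun x hx => mem_Aset.mp (hZA hx))
    have hbcZ : bc m Z = 0 := by have := ac_add_bc Z; omega
    have ha := ac_sdiff_add hZA
    have hb := bc_sdiff_add hZA
    rw [ac_Aset hm1] at ha
    rw [bc_Aset] at hb
    have hZ2 : Z.card = 2 ∧ ac m (Aset m \ Z) + 2 = m := by
      rcases hInd with h | h
      · rw [bc_insert_b heAZ hpe] at h
        omega
      · rw [bc_insert_b heAZ hpe, ac_insert_b hpe] at h
        omega
    dsimp only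
    rw [LST19.sum_ite, LST19.sum_ite, ac_Aset hm1, bc_Aset,
      ac_insert_b hpe, bc_insert_b heAZ hpe]
    have h1 : bc m (Aset m \ Z) = 0 := by omega
    rw [h1]
    have h2 : (ac m (Aset m \ Z) : ℝ) + 2 = (m : ℝ) := by exact_mod_cast hZ2.2
    push_cast
    linarith
  · -- the ratio inequality
    dsimp only
    rw [LST19.sum_ite, LST19.sum_ite, ac_Aset hm1, bc_Aset, ac_Bset, bc_Bset hm1, hcast]
    push_cast
    nlinarith [hεm, hε0]
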